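/- Let x₁, …, x_m be pairwise distinct unit vectors in ℝ^d with strictly positive first coordinate, d ≥ 2. Then there exists w ∈ ℝ^d such that w · x_m > 0 and w · x_i < 0 for all 1 ≤ i ≤ m − 1, provided x_m is chosen so that x_m · e₁ = min_i (x_i · e₁). -/

import Mathlib

/-- separating-direction construction. Given pairwise distinct unit vectors
`x₀, …, x_m` in `ℝ^d` (`d ≥ 2`) with strictly positive first coordinate, if the last one
minimizes the first coordinate (`x_m ⋅ e₁ = min_i (x_i ⋅ e₁)`), then there is a direction
`w` with `w ⋅ x_m > 0` and `w ⋅ x_i < 0` for all the other points. -/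
theorem exists_separating_direction {d m : ℕ} (hd : 2 ≤ d)
    (x : Fin (m + 1) → EuclideanSpace ℝ (Fin d))
    (hdist : Function.Injective x)
    (hnorm : ∀ i, ‖x i‖ = 1)
    (hpos : ∀ i, 0 < x i ⟨0, by omega⟩)
    (hmin : ∀ i, x (Fin.last m) ⟨0, by omega⟩ ≤ x i ⟨0, by omega⟩) :
    ∃ w : EuclideanSpace ℝ (Fin d),
      0 < (inner ℝ w (x (Fin.last m)) : ℝ) ∧
      ∀ i : Fin (m + 1), i ≠ Fin.last m → (inner ℝ w (x i) : ℝ) < 0 := by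
  have h0 : (0 : ℕ) < d := by omega
  set z := x (Fin.last m) with hz
  set a : ℝ := z ⟨0, h0⟩ with ha'
  have ha : 0 < a := hpos _
  set f : Fin (m + 1) → ℝ := fun i =>
    if i = Fin.last m then 0 else (inner ℝ z (x i) : ℝ) / (x i ⟨0, h0⟩) with hf
  have hkey : ∀ i, f i < 1 / a := by
    intro i
    by_cases hi : i = Fin.last m
    · simp only [hf, hi, if_pos]
      positivity
    · simp only [hf, if_neg hi]
      have hb : 0 < x i ⟨0, h0⟩ := hpos i
      have hc1 : (inner ℝ z (x i) : ℝ) < 1 := by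
        refine (inner_lt_one_iff_real_of_norm_eq_one (hnorm _) (hnorm _)).2 ?_
        intro h
        exact hi (hdist h).symm
      rcases le_or_gt (inner ℝ z (x i) : ℝ) 0 with hc | hc
      · calc (inner ℝ z (x i) : ℝ) / (x i ⟨0, h0⟩) ≤ 0 :=
              div_nonpos_of_nonpos_of_nonneg hc hb.le
          _ < 1 / a := by positivity
      · calc (inner ℝ z (x i) : ℝ) / (x i ⟨0, h0⟩) ≤ (inner ℝ z (x i) : ℝ) / a := by
              gcongr
              exact hmin i
          _ < 1 / a := by gcongr
  set M : ℝ := Finset.univ.sup' (Finset.univ_nonempty) f with hM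
  have hMlt : M < 1 / a := by
    rw [hM]
    exact (Finset.sup'_lt_iff Finset.univ_nonempty).2 fun i _ => hkey i
  set t : ℝ := (M + 1 / a) / 2 with ht
  have htM : M < t := by rw [ht]; linarith
  have hta : t < 1 / a := by rw [ht]; linarith
  set e : EuclideanSpace ℝ (Fin d) := EuclideanSpace.single ⟨0, h0⟩ 1 with he
  refine ⟨z - t • e, ?_, ?_⟩
  · have : (inner ℝ (z - t • e) z : ℝ) = 1 - t * a := by
      rw [inner_sub_left, inner_smul_left]
      have h1 : (inner ℝ z z : ℝ) = 1 := by
        rw [real_inner_self_eq_norm_sq, hnorm]; norm_num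
      have h2 : (inner ℝ e z : ℝ) = a := by
        rw [he, EuclideanSpace.inner_single_left]
        simp [ha']
      rw [h1, h2]; simp only [starRingEnd_apply, star_trivial]
    rw [this]
    have : t * a < 1 := by
      have := (mul_lt_mul_of_pos_right hta ha)
      rwa [one_div, inv_mul_cancel₀ ha.ne'] at this
    linarith
  · intro i hi
    have hb : 0 < x i ⟨0, h0⟩ := hpos i
    have hfi : (inner ℝ z (x i) : ℝ) / (x i ⟨0, h0⟩) < t := by
      calc (inner ℝ z (x i) : ℝ) / (x i ⟨0, h0⟩) = f i := by rw [hf]; simp [hi]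
        _ ≤ M := Finset.le_sup' f (Finset.mem_univ i)
        _ < t := htM
    have : (inner ℝ (z - t • e) (x i) : ℝ) = inner ℝ z (x i) - t * (x i ⟨0, h0⟩) := by
      rw [inner_sub_left, inner_smul_left]
      rw [he, EuclideanSpace.inner_single_left]
      simp only [starRingEnd_apply, star_trivial]; ring
    rw [this]
    have := (div_lt_iff₀ hb).1 hfi
    linarith
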